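/- arXiv:1407.3851 — 3 statements merged into one kernel-verified Lean document; each statement's English description precedes it below -/
import Mathlib

section
/- Let Λ be a standard Borel space, Q : Λ → ℝ^m Borel measurable, P_𝒟 a probability measure on ℝ^m, and q ↦ ν_q a Markov kernel from ℝ^m to Λ with ν_q(Q⁻¹({q})) = 1 for P_𝒟-almost every q. Then P(A) := ∫_{ℝ^m} ν_q(A) dP_𝒟(q) defines a probability measure on the Borel σ-algebra of Λ whose pushforward under Q equals P_𝒟. Moreover P is the unique probability measure on Λ with pushforward P_𝒟 whose disintegration kernel along Q agrees with ν_q for P_𝒟-almost every q. -/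
open MeasureTheory ProbabilityTheory
open scoped ENNReal

/-- Under the Ansatz (a Markov kernel `ν` concentrated on the generalized contours
`Q⁻¹({q})` for `P_𝒟`-a.e. `q`), `P(A) := ∫ ν_q(A) dP_𝒟(q)` defines a probability measure
on `Λ` whose pushforward under `Q` is `P_𝒟`, and `P` is the unique probability measure
with pushforward `P_𝒟` whose disintegration kernel along `Q` agrees with `ν` a.e. -/
theorem stmt_5 {Λ : Type*} [MeasurableSpace Λ] [StandardBorelSpace Λ] {m : ℕ}
    (Q : Λ → (Fin m → ℝ)) (hQ : Measurable Q)
    (P𝒟 : Measure (Fin m → ℝ)) [IsProbabilityMeasure P𝒟]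
    (ν : Kernel (Fin m → ℝ) Λ) [IsMarkovKernel ν]
    (hν : ∀ᵐ q ∂P𝒟, ν q (Q ⁻¹' {q}) = 1) :
    ∃ P : Measure Λ, IsProbabilityMeasure P ∧
      (∀ A : Set Λ, MeasurableSet A → P A = ∫⁻ q, ν q A ∂P𝒟) ∧
      P.map Q = P𝒟 ∧
      (∀ P' : Measure Λ, IsProbabilityMeasure P' → P'.map Q = P𝒟 →
        ∀ κ : Kernel (Fin m → ℝ) Λ, IsMarkovKernel κ →
          (∀ A : Set Λ, MeasurableSet A → P' A = ∫⁻ q, κ q A ∂(P'.map Q)) →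
          (∀ᵐ q ∂(P'.map Q), κ q (Q ⁻¹' {q}) = 1) →
          (∀ᵐ q ∂P𝒟, κ q = ν q) → P' = P) := by
  set P : Measure Λ := P𝒟.bind ν with hP
  have hmeas : AEMeasurable (fun q => ν q) P𝒟 := ν.measurable.aemeasurable
  have happly : ∀ A : Set Λ, MeasurableSet A → P A = ∫⁻ q, ν q A ∂P𝒟 := fun A hA =>
    Measure.bind_apply hA ν.measurable.aemeasurable
  have hprob : IsProbabilityMeasure P := by
    constructor
    rw [happly Set.univ MeasurableSet.univ]
    simp
  have hmap : P.map Q = P𝒟 := by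
    ext B hB
    rw [Measure.map_apply hQ hB, happly _ (hQ hB)]
    have : ∀ᵐ q ∂P𝒟, ν q (Q ⁻¹' B) = B.indicator (fun _ => 1) q := by
      filter_upwards [hν] with q hq
      by_cases hqB : q ∈ B
      · have hsub : Q ⁻¹' {q} ⊆ Q ⁻¹' B := fun l hl => by
          simp only [Set.mem_preimage, Set.mem_singleton_iff] at hl
          simp [Set.mem_preimage, hl, hqB]
        have h1 : (1 : ℝ≥0∞) ≤ ν q (Q ⁻¹' B) := hq ▸ measure_mono hsub
        have h2 : ν q (Q ⁻¹' B) ≤ 1 := prob_le_one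
        simp [Set.indicator_of_mem hqB, le_antisymm h2 h1]
      · have hsub : Q ⁻¹' B ⊆ (Q ⁻¹' {q})ᶜ := fun l hl hl' => by
          simp only [Set.mem_preimage, Set.mem_singleton_iff] at hl'
          exact hqB (hl' ▸ hl)
        have hc : ν q (Q ⁻¹' {q})ᶜ = 0 := by
          rw [measure_compl (hQ (measurableSet_singleton q)) (measure_ne_top _ _), hq]
          simp
        have hle : ν q (Q ⁻¹' B) ≤ ν q (Q ⁻¹' {q})ᶜ := measure_mono hsub
        simp [Set.indicator_of_notMem hqB, le_antisymm (hc ▸ hle) zero_le]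
    rw [lintegral_congr_ae this, lintegral_indicator hB]
    simp
  refine ⟨P, hprob, happly, hmap, ?_⟩
  intro P' _ hP'map κ _ hκdis _ hκν
  ext A hA
  rw [hκdis A hA, happly A hA, hP'map]
  exact lintegral_congr_ae (by filter_upwards [hκν] with q hq; rw [hq])
end

section
/- Let Λ ⊆ ℝ^n be a compact set such that every nonempty relatively open subset of Λ has positive Lebesgue measure, and let X_1, X_2, … be i.i.d. random points in Λ whose common law has a Lebesgue-almost everywhere positive density on Λ. Let A ⊆ Λ be a Borel set whose topological boundary (relative to Λ) has Lebesgue measure zero. For each N, let A_N be the Voronoi coverage of A by the cells generated by X_1, …, X_N. Then almost surely the Lebesgue measure of the symmetric difference A_N △ A tends to 0 as N → ∞. -/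
open MeasureTheory ProbabilityTheory Filter
open scoped ENNReal symmDiff

/-- The Voronoi cell of the sample point `pts j` within `Λ`. -/
def voronoiCell {n N : ℕ} (Λ : Set (Fin n → ℝ)) (pts : Fin N → (Fin n → ℝ))
    (j : Fin N) : Set (Fin n → ℝ) :=
  {x ∈ Λ | ∀ i, dist x (pts j) ≤ dist x (pts i)}

/-- The Voronoi coverage of a set `A`: the union of the Voronoi cells whose centers lie
in `A`. -/
def voronoiCoverage {n N : ℕ} (Λ : Set (Fin n → ℝ)) (pts : Fin N → (Fin n → ℝ))
    (A : Set (Fin n → ℝ)) : Set (Fin n → ℝ) :=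
  ⋃ (j : Fin N) (_ : pts j ∈ A), voronoiCell Λ pts j

lemma voronoiCoverage_subset {n N : ℕ} (Λ : Set (Fin n → ℝ))
    (pts : Fin N → (Fin n → ℝ)) (A : Set (Fin n → ℝ)) :
    voronoiCoverage Λ pts A ⊆ Λ := by
  refine Set.iUnion₂_subset fun j _ => fun x hx => hx.1

lemma measurableSet_voronoiCoverage {n N : ℕ} {Λ : Set (Fin n → ℝ)}
    (hΛ : MeasurableSet Λ) (pts : Fin N → (Fin n → ℝ)) (A : Set (Fin n → ℝ)) :
    MeasurableSet (voronoiCoverage Λ pts A) := by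
  refine MeasurableSet.iUnion fun j => MeasurableSet.iUnion fun _ => ?_
  have h : voronoiCell Λ pts j = Λ ∩ ⋂ i, {x | dist x (pts j) ≤ dist x (pts i)} := by
    ext x; simp [voronoiCell, Set.mem_iInter]
  rw [h]
  exact hΛ.inter <| MeasurableSet.iInter fun i =>
    (isClosed_le (continuous_id.dist continuous_const)
      (continuous_id.dist continuous_const)).measurableSet

/-- Deterministic key lemma: if the sample points lie in `Λ` and are dense in `Λ`, then
for every point `x` outside the relative boundary of `A`, eventually `x` belongs to the
Voronoi coverage of `A` iff it belongs to `A`. -/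
lemma eventually_voronoi {n : ℕ} {Λ A : Set (Fin n → ℝ)} (hA : A ⊆ Λ)
    (pts : ℕ → (Fin n → ℝ)) (hmem : ∀ j, pts j ∈ Λ)
    (hdense : ∀ x ∈ Λ, ∀ ε > 0, ∃ j, dist x (pts j) < ε)
    {x : Fin n → ℝ} (hx : x ∉ Λ ∩ closure A ∩ closure (Λ \ A)) :
    ∀ᶠ N in atTop, (x ∈ voronoiCoverage Λ (fun j : Fin N => pts j) A ↔ x ∈ A) := by
  by_cases hxΛ : x ∈ Λ
  · by_cases hxcl : x ∈ closure (Λ \ A)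
    · -- x is away from `closure A`, hence x ∉ A and eventually x ∉ A_N
      have hxA : x ∉ closure A := fun h => hx ⟨⟨hxΛ, h⟩, hxcl⟩
      have hxA' : x ∉ A := fun h => hxA (subset_closure h)
      obtain ⟨ε, hε, hball⟩ :=
        Metric.isOpen_iff.1 isClosed_closure.isOpen_compl x hxA
      obtain ⟨j0, hj0⟩ := hdense x hxΛ ε hε
      filter_upwards [eventually_ge_atTop (j0 + 1)] with N hN
      simp only [iff_false, hxA', iff_false_intro hxA']
      intro hmemc
      simp only [voronoiCoverage, Set.mem_iUnion] at hmemc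
      obtain ⟨j, hjA, hcell⟩ := hmemc
      have hle : dist x (pts j) ≤ dist x (pts j0) := hcell.2 ⟨j0, by omega⟩
      have : (pts (j : ℕ)) ∈ Metric.ball x ε := by
        rw [Metric.mem_ball, dist_comm]
        exact lt_of_le_of_lt hle hj0
      exact hball this (subset_closure hjA)
    · -- x is away from `closure (Λ \ A)`, hence x ∈ A and eventually x ∈ A_N
      have hxA : x ∈ A := by
        by_contra h; exact hxcl (subset_closure ⟨hxΛ, h⟩)
      obtain ⟨ε, hε, hball⟩ :=
        Metric.isOpen_iff.1 isClosed_closure.isOpen_compl x hxcl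
      obtain ⟨j0, hj0⟩ := hdense x hxΛ ε hε
      filter_upwards [eventually_ge_atTop (j0 + 1)] with N hN
      simp only [iff_true_intro hxA, iff_true]
      have hNe : Nonempty (Fin N) := ⟨⟨0, by omega⟩⟩
      obtain ⟨j, -, hjmin⟩ := Finset.exists_min_image Finset.univ
        (fun j : Fin N => dist x (pts j)) Finset.univ_nonempty
      have hlt : dist x (pts (j : ℕ)) < ε :=
        lt_of_le_of_lt (hjmin ⟨j0, by omega⟩ (Finset.mem_univ _)) hj0
      have hptsA : pts (j : ℕ) ∈ A := by
        by_contra hnA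
        have hmb : (pts (j : ℕ)) ∈ Metric.ball x ε := by
          rw [Metric.mem_ball, dist_comm]; exact hlt
        exact hball hmb (subset_closure ⟨hmem j, hnA⟩)
      exact Set.mem_iUnion.2 ⟨j, Set.mem_iUnion.2
        ⟨hptsA, hxΛ, fun i => hjmin i (Finset.mem_univ i)⟩⟩
  · -- x ∉ Λ : both sides are always false
    refine Eventually.of_forall fun N => ?_
    constructor
    · intro h; exact absurd (voronoiCoverage_subset Λ _ A h) hxΛ
    · intro h; exact absurd (hA h) hxΛ

/-- i.i.d. sampling from an a.e. positive density is `ℬ_Λ`-consistent: if `A ⊆ Λ` is Borel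
with relative topological boundary of Lebesgue measure zero, then almost surely the volume
of the symmetric difference between `A` and its Voronoi coverage `A_N` tends to `0`. -/
theorem stmt_9 {n : ℕ} (Λ : Set (Fin n → ℝ)) (hΛ : IsCompact Λ)
    (hopen : ∀ U : Set (Fin n → ℝ), IsOpen U → (U ∩ Λ).Nonempty → 0 < volume (U ∩ Λ))
    {Ω : Type*} [MeasurableSpace Ω] (P : Measure Ω) [IsProbabilityMeasure P]
    (X : ℕ → Ω → (Fin n → ℝ)) (hX : ∀ j, Measurable (X j))
    (hindep : iIndepFun X P)
    (f : (Fin n → ℝ) → ℝ≥0∞) (hf : Measurable f)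
    (hlaw : ∀ j, P.map (X j) = (volume.restrict Λ).withDensity f)
    (hfpos : ∀ᵐ x ∂(volume.restrict Λ), 0 < f x)
    (A : Set (Fin n → ℝ)) (hA : A ⊆ Λ) (hAm : MeasurableSet A)
    (hbd : volume (Λ ∩ closure A ∩ closure (Λ \ A)) = 0) :
    ∀ᵐ ω ∂P, Tendsto
      (fun N => volume ((voronoiCoverage Λ (fun j : Fin N => X j ω) A) ∆ A))
      atTop (nhds 0) := by
  have hΛm : MeasurableSet Λ := hΛ.isClosed.measurableSet
  set μ : Measure (Fin n → ℝ) := (volume.restrict Λ).withDensity f with hμdef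
  have hprob : IsProbabilityMeasure μ := by
    rw [← hlaw 0]; exact Measure.isProbabilityMeasure_map (hX 0).aemeasurable
  -- the law gives positive mass to every open set meeting Λ
  have hpos : ∀ U : Set (Fin n → ℝ), IsOpen U → (U ∩ Λ).Nonempty → 0 < μ U := by
    intro U hU hne
    rcases eq_zero_or_pos (μ U) with h | h
    · exfalso
      rw [hμdef, withDensity_apply f hU.measurableSet,
        Measure.restrict_restrict hU.measurableSet] at h
      have h0 : f =ᵐ[volume.restrict (U ∩ Λ)] 0 := (lintegral_eq_zero_iff hf).1 h
      have h1 : ∀ᵐ x ∂(volume.restrict (U ∩ Λ)), 0 < f x :=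
        ae_mono (Measure.restrict_mono Set.inter_subset_right le_rfl) hfpos
      have hF : ∀ᵐ x ∂(volume.restrict (U ∩ Λ)), False := by
        filter_upwards [h0.and h1] with x hx
        exact hx.2.ne' hx.1
      have hz : volume.restrict (U ∩ Λ) = 0 := by
        rw [← ae_eq_bot]
        exact Filter.eventually_false_iff_eq_bot.1 hF
      have := hopen U hU hne
      rw [← Measure.restrict_apply_univ (U ∩ Λ), hz] at this
      simp at this
    · exact h
  -- samples lie in Λ almost surely
  have hΛae : ∀ j : ℕ, ∀ᵐ ω ∂P, X j ω ∈ Λ := by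
    intro j
    have hμc : μ Λᶜ = 0 := by
      rw [hμdef, withDensity_apply f hΛm.compl, Measure.restrict_restrict hΛm.compl,
        Set.compl_inter_self, Measure.restrict_empty, lintegral_zero_measure]
    have hP : P (X j ⁻¹' Λᶜ) = 0 := by
      rw [← Measure.map_apply (hX j) hΛm.compl, hlaw j, hμc]
    rw [ae_iff]
    convert hP using 2
    rfl
  -- avoiding a fixed open set (meeting Λ) forever has probability zero
  have key : ∀ U : Set (Fin n → ℝ), IsOpen U → (U ∩ Λ).Nonempty →
      P {ω | ∀ j, X j ω ∉ U} = 0 := by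
    intro U hU hne
    have hμU : 0 < μ U := hpos U hU hne
    have hq : μ Uᶜ < 1 := by
      rw [measure_compl hU.measurableSet (measure_ne_top μ U), measure_univ]
      exact ENNReal.sub_lt_self ENNReal.one_ne_top one_ne_zero hμU.ne'
    have hbound : ∀ N : ℕ, P {ω | ∀ j, X j ω ∉ U} ≤ (μ Uᶜ) ^ N := by
      intro N
      have hsub : {ω | ∀ j, X j ω ∉ U} ⊆ ⋂ j ∈ Finset.range N, X j ⁻¹' Uᶜ := by
        intro ω hω
        simp only [Set.mem_iInter]
        exact fun j _ => hω j
      calc P {ω | ∀ j, X j ω ∉ U}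
          ≤ P (⋂ j ∈ Finset.range N, X j ⁻¹' Uᶜ) := measure_mono hsub
        _ = ∏ j ∈ Finset.range N, P (X j ⁻¹' Uᶜ) :=
            hindep.meas_biInter fun i _ => ⟨Uᶜ, hU.measurableSet.compl, rfl⟩
        _ = ∏ j ∈ Finset.range N, μ Uᶜ := by
            refine Finset.prod_congr rfl fun j _ => ?_
            rw [← Measure.map_apply (hX j) hU.measurableSet.compl, hlaw j]
        _ = (μ Uᶜ) ^ N := by rw [Finset.prod_const, Finset.card_range]
    have htend := ENNReal.tendsto_pow_atTop_nhds_zero_of_lt_one hq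
    exact le_antisymm (ge_of_tendsto' htend hbound) (zero_le)
  -- countable dense subset
  obtain ⟨c, hc_count, hc_sub⟩ :=
    TopologicalSpace.IsSeparable.of_separableSpace Λ
  -- the good event
  have hgood : ∀ᵐ ω ∂P, (∀ j, X j ω ∈ Λ) ∧
      ∀ d ∈ c, ∀ k : ℕ, (Metric.ball d (1 / (k + 1 : ℝ)) ∩ Λ).Nonempty →
        ∃ j, X j ω ∈ Metric.ball d (1 / (k + 1 : ℝ)) := by
    refine (ae_all_iff.2 hΛae).and ((ae_ball_iff hc_count).2 fun d _ => ae_all_iff.2 fun k => ?_)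
    by_cases hne : (Metric.ball d (1 / (k + 1 : ℝ)) ∩ Λ).Nonempty
    · have hk := key _ Metric.isOpen_ball hne
      have : ∀ᵐ ω ∂P, ∃ j, X j ω ∈ Metric.ball d (1 / (k + 1 : ℝ)) := by
        rw [ae_iff]
        convert hk using 2
        ext ω
        simp
      exact this.mono fun ω h _ => h
    · exact Eventually.of_forall fun ω h => absurd h hne
  filter_upwards [hgood] with ω hω
  obtain ⟨hmem, hdns⟩ := hω
  -- the samples are dense in Λ
  have hdense : ∀ x ∈ Λ, ∀ ε > 0, ∃ j, dist x (X j ω) < ε := by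
    intro x hx ε hε
    obtain ⟨k, hk⟩ := exists_nat_one_div_lt (half_pos hε)
    have hxc : x ∈ closure c := hc_sub hx
    have hkpos : (0 : ℝ) < 1 / (k + 1 : ℝ) := by positivity
    obtain ⟨d, hd, hdist⟩ := Metric.mem_closure_iff.1 hxc _ hkpos
    have hne : (Metric.ball d (1 / (k + 1 : ℝ)) ∩ Λ).Nonempty :=
      ⟨x, Metric.mem_ball.2 hdist, hx⟩
    obtain ⟨j, hj⟩ := hdns d hd k hne
    refine ⟨j, ?_⟩
    have ht : dist x (X j ω) ≤ dist x d + dist d (X j ω) := dist_triangle _ _ _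
    have h2 : dist d (X j ω) < 1 / (k + 1 : ℝ) := by
      rw [dist_comm]; exact Metric.mem_ball.1 hj
    linarith
  -- conclude by dominated convergence for indicators
  have hlim : Tendsto
      (fun N => volume ((voronoiCoverage Λ (fun j : Fin N => X j ω) A) ∆ A))
      atTop (nhds (volume (∅ : Set (Fin n → ℝ)))) := by
    refine tendsto_measure_of_ae_tendsto_indicator atTop MeasurableSet.empty
      (fun N => (measurableSet_voronoiCoverage hΛm _ _).symmDiff hAm)
      hΛm hΛ.measure_lt_top.ne
      (Eventually.of_forall fun N => ?_) ?_
    · exact Set.Subset.trans symmDiff_le_sup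
        (Set.union_subset (voronoiCoverage_subset _ _ _) hA)
    · have hb : ∀ᵐ x ∂(volume : Measure (Fin n → ℝ)),
          x ∉ Λ ∩ closure A ∩ closure (Λ \ A) := measure_eq_zero_iff_ae_notMem.1 hbd
      filter_upwards [hb] with x hx
      filter_upwards [eventually_voronoi hA (fun j => X j ω) hmem hdense hx] with N hN
      simp only [Set.mem_empty_iff_false, iff_false]
      intro hxs
      rw [Set.mem_symmDiff] at hxs
      rcases hxs with ⟨h1, h2⟩ | ⟨h1, h2⟩
      · exact h2 (hN.1 h1)
      · exact h2 (hN.2 h1)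
  simpa using hlim
end

section
/- Let Λ ⊆ ℝ^n be compact with every nonempty relatively open subset of Λ of positive Lebesgue measure μ, and let X_1, X_2, … be i.i.d. points of Λ with a Lebesgue-a.e. positive density. Let A_1, …, A_M ⊆ Λ be pairwise disjoint Borel sets covering Λ with μ(A_i) > 0 and μ(∂A_i) = 0 for every i, let p_1, …, p_M ≥ 0 with Σ p_i = 1, and let A ⊆ Λ be Borel with μ(∂A) = 0. For each N let A_N and A_{i,N} denote the Voronoi coverages of A and A_i by the cells generated by X_1, …, X_N, and, whenever μ(A_{i,N}) > 0 for all i, define the counting-measure approximation P̃_N(A) := Σ_{i=1}^M p_i · μ(A_N ∩ A_{i,N})/μ(A_{i,N}). Then almost surely the denominators are eventually positive and P̃_N(A) → P_Λ(A) := Σ_{i=1}^M p_i · μ(A ∩ A_i)/μ(A_i) as N → ∞. -/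
open MeasureTheory ProbabilityTheory Filter
open scoped ENNReal Topology

/-- Approximate relative boundary of `B` inside `Λ`. -/
def bdApprox {n : ℕ} (Λ B : Set (Fin n → ℝ)) (ε : ℝ) : Set (Fin n → ℝ) :=
  Λ ∩ {x | EMetric.infEdist x (closure B) ≤ ENNReal.ofReal ε} ∩
    {x | EMetric.infEdist x (closure (Λ \ B)) ≤ ENNReal.ofReal ε}

lemma bdApprox_mono {n : ℕ} {Λ B : Set (Fin n → ℝ)} {ε ε' : ℝ} (h : ε ≤ ε') :
    bdApprox Λ B ε ⊆ bdApprox Λ B ε' := by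
  intro x hx
  obtain ⟨⟨h1, h2⟩, h3⟩ := hx
  exact ⟨⟨h1, le_trans h2 (ENNReal.ofReal_le_ofReal h)⟩,
    le_trans h3 (ENNReal.ofReal_le_ofReal h)⟩

lemma bdApprox_small {n : ℕ} {Λ B : Set (Fin n → ℝ)} (hΛ : IsCompact Λ)
    (hbd : volume (Λ ∩ closure B ∩ closure (Λ \ B)) = 0) {δ : ℝ≥0∞} (hδ : 0 < δ) :
    ∃ ε : ℝ, 0 < ε ∧ volume (bdApprox Λ B ε) ≤ δ := by
  have hmeas : ∀ ε : ℝ, MeasurableSet (bdApprox Λ B ε) := fun ε =>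
    (hΛ.isClosed.measurableSet.inter
      (isClosed_le EMetric.continuous_infEdist continuous_const).measurableSet).inter
      (isClosed_le EMetric.continuous_infEdist continuous_const).measurableSet
  have hanti : Antitone fun k : ℕ => bdApprox Λ B (1 / (k + 1)) := by
    intro k m hkm
    refine bdApprox_mono ?_
    apply one_div_le_one_div_of_le (by positivity)
    exact_mod_cast add_le_add_left (Nat.cast_le.2 hkm) 1
  have htend0 : Tendsto (fun k : ℕ => ENNReal.ofReal (1 / (k + 1))) atTop (𝓝 0) := by
    rw [show (0 : ℝ≥0∞) = ENNReal.ofReal 0 by simp]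
    exact (ENNReal.continuous_ofReal.tendsto 0).comp tendsto_one_div_add_atTop_nhds_zero_nat
  have hsub : (⋂ k : ℕ, bdApprox Λ B (1 / (k + 1))) ⊆ Λ ∩ closure B ∩ closure (Λ \ B) := by
    intro x hx
    simp only [Set.mem_iInter] at hx
    have hxΛ : x ∈ Λ := (hx 0).1.1
    have e1 : EMetric.infEdist x (closure B) = 0 :=
      le_antisymm (ge_of_tendsto' htend0 fun k => (hx k).1.2) zero_le
    have e2 : EMetric.infEdist x (closure (Λ \ B)) = 0 :=
      le_antisymm (ge_of_tendsto' htend0 fun k => (hx k).2) zero_le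
    have m1 : x ∈ closure B := by
      have := EMetric.mem_closure_iff_infEdist_zero.2 e1
      rwa [closure_closure] at this
    have m2 : x ∈ closure (Λ \ B) := by
      have := EMetric.mem_closure_iff_infEdist_zero.2 e2
      rwa [closure_closure] at this
    exact ⟨⟨hxΛ, m1⟩, m2⟩
  have hfin : volume (bdApprox Λ B (1 / ((0 : ℕ) + 1))) ≠ ∞ :=
    (lt_of_le_of_lt (measure_mono fun x hx => hx.1.1) hΛ.measure_lt_top).ne
  have htend := tendsto_measure_iInter_atTop
    (fun k => (hmeas _).nullMeasurableSet) hanti ⟨0, hfin⟩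
  have hz : volume (⋂ k : ℕ, bdApprox Λ B (1 / (k + 1))) = 0 :=
    le_antisymm (le_trans (measure_mono hsub) hbd.le) zero_le
  rw [hz] at htend
  obtain ⟨k, hk⟩ := (ENNReal.tendsto_nhds_zero.1 htend δ hδ).exists
  exact ⟨1 / (k + 1), by positivity, hk⟩

lemma cov_symmDiff_subset {n N : ℕ} {Λ B : Set (Fin n → ℝ)} {pts : Fin N → (Fin n → ℝ)}
    (hpts : ∀ j, pts j ∈ Λ) (hB : B ⊆ Λ) {ε : ℝ}
    (hmesh : ∀ x ∈ Λ, ∃ j : Fin N, dist x (pts j) ≤ ε) :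
    (voronoiCoverage Λ pts B \ B) ∪ (B \ voronoiCoverage Λ pts B) ⊆ bdApprox Λ B ε := by
  intro x hx
  have hedist : ∀ (y : Fin n → ℝ) (S : Set (Fin n → ℝ)), y ∈ S → dist x y ≤ ε →
      EMetric.infEdist x (closure S) ≤ ENNReal.ofReal ε := by
    intro y S hy hd
    refine le_trans (EMetric.infEdist_le_edist_of_mem (subset_closure hy)) ?_
    rw [edist_dist]
    exact ENNReal.ofReal_le_ofReal hd
  rcases hx with hx | hx
  · obtain ⟨hxcov, hxB⟩ := hx
    simp only [voronoiCoverage, Set.mem_iUnion] at hxcov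
    obtain ⟨j, hjB, hxΛ, hcell⟩ := hxcov
    obtain ⟨i₀, hi₀⟩ := hmesh x hxΛ
    have hdj : dist x (pts j) ≤ ε := le_trans (hcell i₀) hi₀
    refine ⟨⟨hxΛ, hedist _ _ hjB hdj⟩, ?_⟩
    have : x ∈ closure (Λ \ B) := subset_closure ⟨hxΛ, hxB⟩
    exact (EMetric.infEdist_zero_of_mem this).le.trans zero_le
  · obtain ⟨hxB, hxcov⟩ := hx
    have hxΛ : x ∈ Λ := hB hxB
    obtain ⟨i₀, hi₀⟩ := hmesh x hxΛ
    obtain ⟨j, -, hjmin⟩ := Finset.exists_min_image Finset.univ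
      (fun j => dist x (pts j)) ⟨i₀, Finset.mem_univ i₀⟩
    have hxcell : x ∈ voronoiCell Λ pts j := ⟨hxΛ, fun i => hjmin i (Finset.mem_univ i)⟩
    have hjB : pts j ∉ B := by
      intro hjB
      exact hxcov (Set.mem_iUnion.2 ⟨j, Set.mem_iUnion.2 ⟨hjB, hxcell⟩⟩)
    have hdj : dist x (pts j) ≤ ε := le_trans (hjmin i₀ (Finset.mem_univ i₀)) hi₀
    refine ⟨⟨hxΛ, ?_⟩, hedist _ _ ⟨hpts j, hjB⟩ hdj⟩
    have : x ∈ closure B := subset_closure hxB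
    exact (EMetric.infEdist_zero_of_mem this).le.trans zero_le

lemma tendsto_measure_of_symmDiff {α : Type*} [MeasurableSpace α] {μ : Measure α}
    {S : ℕ → Set α} {T : Set α} (hT : μ T ≠ ∞)
    (h : ∀ δ : ℝ≥0∞, 0 < δ → ∀ᶠ N in atTop, μ ((S N \ T) ∪ (T \ S N)) ≤ δ) :
    Tendsto (fun N => μ (S N)) atTop (𝓝 (μ T)) := by
  rw [ENNReal.tendsto_nhds hT]
  intro ε hε
  filter_upwards [h ε hε] with N hN
  have hd1 : μ (T \ S N) ≤ ε := le_trans (measure_mono Set.subset_union_right) hN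
  have hd2 : μ (S N \ T) ≤ ε := le_trans (measure_mono Set.subset_union_left) hN
  constructor
  · have : μ T ≤ μ (S N) + ε := by
      calc μ T ≤ μ (S N ∪ T \ S N) := measure_mono (by intro x hx; by_cases hxS : x ∈ S N
                                                       · exact Or.inl hxS
                                                       · exact Or.inr ⟨hx, hxS⟩)
        _ ≤ μ (S N) + μ (T \ S N) := measure_union_le _ _
        _ ≤ μ (S N) + ε := add_le_add_right hd1 _
    exact tsub_le_iff_right.mpr this
  · calc μ (S N) ≤ μ (T ∪ S N \ T) := measure_mono (by intro x hx; by_cases hxT : x ∈ T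
                                                       · exact Or.inl hxT
                                                       · exact Or.inr ⟨hx, hxT⟩)
      _ ≤ μ T + μ (S N \ T) := measure_union_le _ _
      _ ≤ μ T + ε := add_le_add_right hd2 _

lemma tendsto_cov {n : ℕ} {Λ : Set (Fin n → ℝ)} (hΛ : IsCompact Λ)
    {pts : ℕ → (Fin n → ℝ)} (hpts : ∀ j, pts j ∈ Λ)
    (hmesh : ∀ ε : ℝ, 0 < ε → ∀ᶠ N in atTop,
      ∀ x ∈ Λ, ∃ j : Fin N, dist x (pts j) ≤ ε)
    {B C : Set (Fin n → ℝ)} (hB : B ⊆ Λ) (hC : C ⊆ Λ)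
    (hBbd : volume (Λ ∩ closure B ∩ closure (Λ \ B)) = 0)
    (hCbd : volume (Λ ∩ closure C ∩ closure (Λ \ C)) = 0) :
    Tendsto (fun N => volume (voronoiCoverage Λ (fun j : Fin N => pts j) B ∩
        voronoiCoverage Λ (fun j : Fin N => pts j) C)) atTop (𝓝 (volume (B ∩ C))) := by
  have hTfin : volume (B ∩ C) ≠ ∞ :=
    (lt_of_le_of_lt (measure_mono fun x hx => hB hx.1) hΛ.measure_lt_top).ne
  refine tendsto_measure_of_symmDiff hTfin ?_
  intro δ hδ
  obtain ⟨εB, hεB, hvB⟩ := bdApprox_small hΛ hBbd (ENNReal.half_pos hδ.ne')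
  obtain ⟨εC, hεC, hvC⟩ := bdApprox_small hΛ hCbd (ENNReal.half_pos hδ.ne')
  have hε : 0 < min εB εC := lt_min hεB hεC
  filter_upwards [hmesh _ hε] with N hN
  set covB := voronoiCoverage Λ (fun j : Fin N => pts j) B
  set covC := voronoiCoverage Λ (fun j : Fin N => pts j) C
  have hsubB : (covB \ B) ∪ (B \ covB) ⊆ bdApprox Λ B εB :=
    le_trans (cov_symmDiff_subset (fun j => hpts j) hB hN)
      (bdApprox_mono (min_le_left _ _))
  have hsubC : (covC \ C) ∪ (C \ covC) ⊆ bdApprox Λ C εC :=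
    le_trans (cov_symmDiff_subset (fun j => hpts j) hC hN)
      (bdApprox_mono (min_le_right _ _))
  have hincl : ((covB ∩ covC) \ (B ∩ C)) ∪ ((B ∩ C) \ (covB ∩ covC)) ⊆
      bdApprox Λ B εB ∪ bdApprox Λ C εC := by
    intro x hx
    rcases hx with ⟨⟨h1, h2⟩, h3⟩ | ⟨⟨h1, h2⟩, h3⟩
    · by_cases hxB : x ∈ B
      · exact Or.inr (hsubC (Or.inl ⟨h2, fun hxC => h3 ⟨hxB, hxC⟩⟩))
      · exact Or.inl (hsubB (Or.inl ⟨h1, hxB⟩))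
    · by_cases hxB : x ∈ covB
      · exact Or.inr (hsubC (Or.inr ⟨h2, fun hxC => h3 ⟨hxB, hxC⟩⟩))
      · exact Or.inl (hsubB (Or.inr ⟨h1, hxB⟩))
  calc volume (((covB ∩ covC) \ (B ∩ C)) ∪ ((B ∩ C) \ (covB ∩ covC)))
      ≤ volume (bdApprox Λ B εB ∪ bdApprox Λ C εC) := measure_mono hincl
    _ ≤ volume (bdApprox Λ B εB) + volume (bdApprox Λ C εC) := measure_union_le _ _
    _ ≤ δ / 2 + δ / 2 := add_le_add hvB hvC
    _ = δ := ENNReal.add_halves δ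

lemma mesh_of_dense {n : ℕ} {Λ : Set (Fin n → ℝ)} (hΛ : IsCompact Λ)
    {pts : ℕ → (Fin n → ℝ)}
    (hdense : ∀ x ∈ Λ, ∀ ε : ℝ, 0 < ε → ∃ j : ℕ, dist x (pts j) < ε) :
    ∀ ε : ℝ, 0 < ε → ∀ᶠ N in atTop, ∀ x ∈ Λ, ∃ j : Fin N, dist x (pts j) ≤ ε := by
  intro ε hε
  have hcov : Λ ⊆ ⋃ j : ℕ, Metric.ball (pts j) ε := by
    intro x hx
    obtain ⟨j, hj⟩ := hdense x hx ε hε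
    exact Set.mem_iUnion.2 ⟨j, by simpa [Metric.mem_ball] using hj⟩
  obtain ⟨t, ht⟩ := hΛ.elim_finite_subcover (fun j => Metric.ball (pts j) ε)
    (fun j => Metric.isOpen_ball) hcov
  refine eventually_atTop.2 ⟨t.sup id + 1, fun N hN x hx => ?_⟩
  obtain ⟨j, hjt, hj⟩ := Set.mem_iUnion₂.1 (ht hx)
  have hjN : j < N := lt_of_lt_of_le (Nat.lt_succ_of_le (Finset.le_sup (f := id) hjt)) hN
  exact ⟨⟨j, hjN⟩, (by simpa [Metric.mem_ball] using hj : dist x (pts j) < ε).le⟩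

/-- Convergence of the counting-measure approximation: for i.i.d. samples from an a.e.
positive density on a compact `Λ ⊆ ℝ^n`, a measurable partition `A_1, …, A_M` of `Λ`
(with positive volumes and relative boundaries of measure zero), weights `p_i` summing
to one, and a Borel `A ⊆ Λ` with relative boundary of measure zero, almost surely the
Voronoi coverages of the `A_i` eventually have positive volume and
`P̃_N(A) = Σ_i p_i μ(A_N ∩ A_{i,N})/μ(A_{i,N}) → P_Λ(A) = Σ_i p_i μ(A ∩ A_i)/μ(A_i)`. -/
theorem stmt_13 {n : ℕ} (Λ : Set (Fin n → ℝ)) (hΛ : IsCompact Λ)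
    (hopen : ∀ U : Set (Fin n → ℝ), IsOpen U → (U ∩ Λ).Nonempty → 0 < volume (U ∩ Λ))
    {Ω : Type*} [MeasurableSpace Ω] (P : Measure Ω) [IsProbabilityMeasure P]
    (X : ℕ → Ω → (Fin n → ℝ)) (hX : ∀ j, Measurable (X j))
    (hindep : iIndepFun X P)
    (f : (Fin n → ℝ) → ℝ≥0∞) (hf : Measurable f)
    (hlaw : ∀ j, P.map (X j) = (volume.restrict Λ).withDensity f)
    (hfpos : ∀ᵐ x ∂(volume.restrict Λ), 0 < f x)
    {M : ℕ} (A' : Fin M → Set (Fin n → ℝ)) (hA'm : ∀ i, MeasurableSet (A' i))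
    (hA'sub : ∀ i, A' i ⊆ Λ) (hdisj : Pairwise (Function.onFun Disjoint A'))
    (hcov : ⋃ i, A' i = Λ)
    (hA'pos : ∀ i, 0 < volume (A' i))
    (hA'bd : ∀ i, volume (Λ ∩ closure (A' i) ∩ closure (Λ \ A' i)) = 0)
    (p : Fin M → ℝ≥0∞) (hsum : ∑ i, p i = 1)
    (A : Set (Fin n → ℝ)) (hAm : MeasurableSet A) (hA : A ⊆ Λ)
    (hAbd : volume (Λ ∩ closure A ∩ closure (Λ \ A)) = 0) :
    ∀ᵐ ω ∂P,
      (∀ᶠ N in atTop, ∀ i,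
        0 < volume (voronoiCoverage Λ (fun j : Fin N => X j ω) (A' i))) ∧
      Tendsto
        (fun N => ∑ i, p i *
          (volume (voronoiCoverage Λ (fun j : Fin N => X j ω) A ∩
              voronoiCoverage Λ (fun j : Fin N => X j ω) (A' i)) /
            volume (voronoiCoverage Λ (fun j : Fin N => X j ω) (A' i))))
        atTop (nhds (∑ i, p i * (volume (A ∩ A' i) / volume (A' i)))) := by
  classical
  have hΛmeas : MeasurableSet Λ := hΛ.isClosed.measurableSet
  set ν : Measure (Fin n → ℝ) := (volume.restrict Λ).withDensity f with hν
  have hνprob : IsProbabilityMeasure ν := by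
    have := Measure.isProbabilityMeasure_map (μ := P) (hX 0).aemeasurable
    rwa [hlaw 0] at this
  have hmemΛ : ∀ᵐ ω ∂P, ∀ j, X j ω ∈ Λ := by
    rw [ae_all_iff]
    intro j
    have h0 : ν Λᶜ = 0 := by
      rw [hν, withDensity_apply _ hΛmeas.compl, Measure.restrict_restrict hΛmeas.compl]
      simp [Set.compl_inter_self]
    have hpre : P (X j ⁻¹' Λᶜ) = 0 := by
      rw [← Measure.map_apply (hX j) hΛmeas.compl, hlaw j]; exact h0
    rw [ae_iff]
    exact hpre
  have key : ∀ V : Set (Fin n → ℝ), MeasurableSet V → V ⊆ Λ → 0 < volume V →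
      ∀ᵐ ω ∂P, ∃ j, X j ω ∈ V := by
    intro V hVm hVΛ hVpos
    have hc : 0 < ν V := by
      rw [hν, withDensity_apply _ hVm, pos_iff_ne_zero]
      intro hzero
      have h1 := (setLIntegral_eq_zero_iff hVm hf).mp hzero
      have h2 : ∀ᵐ x ∂(volume.restrict Λ), x ∉ V := by
        filter_upwards [h1, hfpos] with x hx1 hx2 hxV
        exact hx2.ne' (hx1 hxV)
      have h3 : (volume.restrict Λ) V = 0 := by
        rw [ae_iff] at h2
        simpa [not_not] using h2
      rw [Measure.restrict_apply hVm, Set.inter_eq_self_of_subset_left hVΛ] at h3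
      exact hVpos.ne' h3
    have hfact : ∀ j, P (X j ⁻¹' Vᶜ) = 1 - ν V := by
      intro j
      rw [← Measure.map_apply (hX j) hVm.compl, hlaw j]
      exact prob_compl_eq_one_sub hVm
    have hiter : ∀ N : ℕ, P (⋂ j, X j ⁻¹' Vᶜ) ≤ (1 - ν V) ^ N := by
      intro N
      have hsub : (⋂ j, X j ⁻¹' Vᶜ) ⊆ ⋂ j ∈ Finset.range N, X j ⁻¹' Vᶜ := by
        intro x hx
        simp only [Set.mem_iInter] at hx ⊢
        exact fun j _ => hx j
      refine le_trans (measure_mono hsub) ?_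
      rw [hindep.measure_inter_preimage_eq_mul (Finset.range N)
        (sets := fun _ => Vᶜ) (fun i _ => hVm.compl)]
      rw [Finset.prod_congr rfl fun j _ => hfact j, Finset.prod_const, Finset.card_range]
    have hlim : Tendsto (fun N : ℕ => ((1 : ℝ≥0∞) - ν V) ^ N) atTop (𝓝 0) :=
      ENNReal.tendsto_pow_atTop_nhds_zero_of_lt_one
        (ENNReal.sub_lt_self ENNReal.one_ne_top one_ne_zero hc.ne')
    have h0 : P (⋂ j, X j ⁻¹' Vᶜ) = 0 :=
      le_antisymm (ge_of_tendsto' hlim hiter) zero_le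
    have hset : {ω | ¬ ∃ j, X j ω ∈ V} = ⋂ j, X j ⁻¹' Vᶜ := by
      ext a
      simp [Set.mem_iInter]
    rw [ae_iff, hset]
    exact h0
  set s : ℕ → (Fin n → ℝ) := TopologicalSpace.denseSeq (Fin n → ℝ) with hs_def
  have hs : DenseRange s := TopologicalSpace.denseRange_denseSeq _
  have hdense_ae : ∀ᵐ ω ∂P, ∀ q k : ℕ,
      (Metric.ball (s q) (1 / (k + 1)) ∩ Λ).Nonempty →
      ∃ j, X j ω ∈ Metric.ball (s q) (1 / (k + 1)) ∩ Λ := by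
    rw [ae_all_iff]
    intro q
    rw [ae_all_iff]
    intro k
    by_cases hne : (Metric.ball (s q) (1 / (k + 1)) ∩ Λ).Nonempty
    · have hkey := key _ (measurableSet_ball.inter hΛmeas) Set.inter_subset_right
        (hopen _ Metric.isOpen_ball hne)
      filter_upwards [hkey] with ω h _
      exact h
    · filter_upwards with ω h
      exact absurd h hne
  filter_upwards [hmemΛ, hdense_ae] with ω hωΛ hωd
  have hdense : ∀ x ∈ Λ, ∀ ε : ℝ, 0 < ε → ∃ j : ℕ, dist x (X j ω) < ε := by
    intro x hx ε hε
    obtain ⟨k, hk⟩ := exists_nat_one_div_lt (half_pos hε)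
    have hkpos : (0 : ℝ) < 1 / (k + 1) := by positivity
    obtain ⟨q, hq⟩ := Metric.denseRange_iff.mp hs x (1 / (k + 1)) hkpos
    obtain ⟨j, hj⟩ := hωd q k ⟨x, ⟨Metric.mem_ball.2 hq, hx⟩⟩
    refine ⟨j, ?_⟩
    have h4 : dist (X j ω) (s q) < 1 / (k + 1) := Metric.mem_ball.1 hj.1
    calc dist x (X j ω) ≤ dist x (s q) + dist (s q) (X j ω) := dist_triangle _ _ _
      _ < 1 / (k + 1) + 1 / (k + 1) := add_lt_add hq (by rwa [dist_comm] at h4)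
      _ < ε / 2 + ε / 2 := add_lt_add hk hk
      _ = ε := add_halves ε
  have hmesh := mesh_of_dense hΛ (pts := fun j => X j ω) hdense
  have conv_c : ∀ i, Tendsto (fun N => volume
      (voronoiCoverage Λ (fun j : Fin N => X j ω) A ∩
       voronoiCoverage Λ (fun j : Fin N => X j ω) (A' i))) atTop
      (𝓝 (volume (A ∩ A' i))) := fun i =>
    tendsto_cov hΛ hωΛ hmesh hA (hA'sub i) hAbd (hA'bd i)
  have conv_i : ∀ i, Tendsto (fun N => volume
      (voronoiCoverage Λ (fun j : Fin N => X j ω) (A' i))) atTop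
      (𝓝 (volume (A' i))) := by
    intro i
    have := tendsto_cov hΛ hωΛ hmesh (hA'sub i) (hA'sub i) (hA'bd i) (hA'bd i)
    simpa [Set.inter_self] using this
  refine ⟨?_, ?_⟩
  · rw [eventually_all]
    intro i
    have hmem : Set.Ioi (0 : ℝ≥0∞) ∈ 𝓝 (volume (A' i)) := isOpen_Ioi.mem_nhds (hA'pos i)
    filter_upwards [(conv_i i) hmem] with N hN
    exact hN
  · refine tendsto_finset_sum _ fun i _ => ?_
    have hfinA' : volume (A' i) ≠ ∞ :=
      (lt_of_le_of_lt (measure_mono (hA'sub i)) hΛ.measure_lt_top).ne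
    have hp : p i ≠ ∞ := by
      have hle : p i ≤ 1 :=
        hsum ▸ Finset.single_le_sum (f := p) (fun j _ => zero_le) (Finset.mem_univ i)
      exact (lt_of_le_of_lt hle ENNReal.one_lt_top).ne
    exact ENNReal.Tendsto.const_mul
      (ENNReal.Tendsto.div (conv_c i) (Or.inr (hA'pos i).ne') (conv_i i) (Or.inl hfinA'))
      (Or.inr hp)
end
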